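/- Let w ∈ W be a basic involution, and let Z_B, Z_U, Z_T denote the stabilizers of f_w under the coadjoint action in B, U, T respectively. Then the multiplication map Z_U × Z_T → Z_B, (u,h) ↦ uh, is well defined and bijective. -/

import Mathlib

/-!
The Weyl group of type `Dₙ`, realized as the group of permutations `w` of `ℤ`
supported on `{±1, …, ±n}` with `w (-i) = - w i` and an even number of sign changes.
-/

open Equiv

/-- The simple reflections of type `Dₙ`, indexed by `i ∈ {1, …, n}`:
`sᵢ = (i, i+1)(-i, -(i+1))` for `1 ≤ i ≤ n - 1`, and
`sₙ = (n-1, -n)(-(n-1), n)`. -/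
def simpleRefl (n : ℕ) (i : ℕ) : Equiv.Perm ℤ :=
  if i < n then Equiv.swap (i : ℤ) ((i : ℤ) + 1) * Equiv.swap (-(i : ℤ)) (-((i : ℤ) + 1))
  else Equiv.swap ((n : ℤ) - 1) (-(n : ℤ)) * Equiv.swap (-((n : ℤ) - 1)) (n : ℤ)

/-- A word in the letters `{1, …, n}` (indices of simple reflections). -/
def IsWord (n : ℕ) (L : List ℕ) : Prop := ∀ i ∈ L, 1 ≤ i ∧ i ≤ n

/-- The product `s_{i₁} ⋯ s_{i_l}` of the word `L = [i₁, …, i_l]`. -/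
def wordProd (n : ℕ) (L : List ℕ) : Equiv.Perm ℤ := (L.map (simpleRefl n)).prod

/-- Membership in the Weyl group `W` of type `Dₙ`: a permutation of `ℤ` commuting with
negation, fixing every integer of absolute value `> n`, and with an even number of
`i ∈ {1, …, n}` such that `w i < 0`. -/
def IsD (n : ℕ) (w : Equiv.Perm ℤ) : Prop :=
  (∀ i : ℤ, w (-i) = -(w i)) ∧ (∀ i : ℤ, (n : ℤ) < |i| → w i = i) ∧
    Even (((Finset.Icc (1 : ℤ) (n : ℤ)).filter fun i => w i < 0).card)

/-- The length `ℓ(w)`: the minimal number of factors in an expression of `w` as a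
product of simple reflections. -/
noncomputable def weylLength (n : ℕ) (w : Equiv.Perm ℤ) : ℕ :=
  sInf {l | ∃ L : List ℕ, IsWord n L ∧ L.length = l ∧ wordProd n L = w}

/-- `L` is a reduced decomposition of `w`. -/
def IsReducedWord (n : ℕ) (w : Equiv.Perm ℤ) (L : List ℕ) : Prop :=
  IsWord n L ∧ wordProd n L = w ∧ L.length = weylLength n w

/-- `w` is a basic involution: `w ∈ W`, `w² = id`, and `w i ≠ -i` for all `i ∈ {1, …, n}`. -/
def IsBasicInvolution (n : ℕ) (w : Equiv.Perm ℤ) : Prop :=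
  IsD n w ∧ w * w = 1 ∧ ∀ i : ℤ, 1 ≤ i → i ≤ (n : ℤ) → w i ≠ -i

/-!
The group `SO₂ₙ(ℂ)`, its subgroups `B`, `U`, `T`, and the coadjoint action on `𝔫*`.
Rows and columns of `2n × 2n` matrices are indexed by `1, …, n, -n, …, -1`; the index
`i > 0` labels row `i - 1` (0-based) and the index `-j` labels row `2n - j` (0-based).
-/

/-- `2n × 2n` complex matrices. -/
abbrev Mat (n : ℕ) : Type := Matrix (Fin (2 * n)) (Fin (2 * n)) ℂ

/-- The matrix `J` with `1`'s on the antidiagonal and `0`'s elsewhere. -/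
def antidiagJ (n : ℕ) : Mat n :=
  Matrix.of fun i j => if (i : ℕ) + (j : ℕ) = 2 * n - 1 then 1 else 0

/-- The strictly lower-triangular part of a matrix. -/
def lowPart (n : ℕ) (M : Mat n) : Mat n :=
  Matrix.of fun i j => if (j : ℕ) < (i : ℕ) then M i j else 0

/-- Membership in `SO₂ₙ(ℂ) = {g ∈ SL₂ₙ(ℂ) : gᵀ J g = J}`. -/
def IsSO (n : ℕ) (g : Mat n) : Prop :=
  g.det = 1 ∧ g.transpose * antidiagJ n * g = antidiagJ n

/-- The Borel subgroup `B`: upper-triangular matrices in `SO₂ₙ(ℂ)`. -/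
def Bset (n : ℕ) : Set (Mat n) :=
  {g | IsSO n g ∧ ∀ i j : Fin (2 * n), (j : ℕ) < (i : ℕ) → g i j = 0}

/-- The unipotent radical `U`: upper-triangular matrices in `SO₂ₙ(ℂ)` with `1`'s on
the diagonal. -/
def Uset (n : ℕ) : Set (Mat n) := {g | g ∈ Bset n ∧ ∀ i, g i i = 1}

/-- The maximal torus `T`: diagonal matrices in `SO₂ₙ(ℂ)`. -/
def Tset (n : ℕ) : Set (Mat n) := {g | IsSO n g ∧ ∀ i j, i ≠ j → g i j = 0}

/-- The coadjoint action `b.λ = (b λ b⁻¹)_low`. -/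
noncomputable def coad (n : ℕ) (b lam : Mat n) : Mat n := lowPart n (b * lam * b⁻¹)

/-- The support of an involution `w`, encoded as triples: `(i, j, false)` stands for the
root `ε_{i+1} - ε_{j+1}` (so `w (i+1) = j+1`), `(i, j, true)` for `ε_{i+1} + ε_{j+1}`
(so `w (i+1) = -(j+1)`); here `i < j` as elements of `Fin n` (0-based indexing). -/
def suppFinset (n : ℕ) (w : Equiv.Perm ℤ) : Finset (Fin n × Fin n × Bool) :=
  Finset.univ.filter fun r =>
    r.1 < r.2.1 ∧
      ((r.2.2 = false ∧ w (((r.1 : ℕ) : ℤ) + 1) = ((r.2.1 : ℕ) : ℤ) + 1) ∨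
       (r.2.2 = true ∧ w (((r.1 : ℕ) : ℤ) + 1) = -(((r.2.1 : ℕ) : ℤ) + 1)))

/-- The basis vector `e_β*` of `𝔫*`: for `β = ε_i - ε_j` (1-based `i < j`),
`e_β* = E_{j,i} - E_{-i,-j}`; for `β = ε_i + ε_j`, `e_β* = E_{-j,i} - E_{-i,j}`. -/
def eStar (n : ℕ) (r : Fin n × Fin n × Bool) : Mat n :=
  if r.2.2 then
    Matrix.single ⟨2 * n - 1 - (r.2.1 : ℕ), by have := r.2.1.isLt; omega⟩
        ⟨(r.1 : ℕ), by have := r.1.isLt; omega⟩ 1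
      - Matrix.single ⟨2 * n - 1 - (r.1 : ℕ), by have := r.1.isLt; omega⟩
        ⟨(r.2.1 : ℕ), by have := r.2.1.isLt; omega⟩ 1
  else
    Matrix.single ⟨(r.2.1 : ℕ), by have := r.2.1.isLt; omega⟩
        ⟨(r.1 : ℕ), by have := r.1.isLt; omega⟩ 1
      - Matrix.single ⟨2 * n - 1 - (r.1 : ℕ), by have := r.1.isLt; omega⟩
        ⟨2 * n - 1 - (r.2.1 : ℕ), by have := r.2.1.isLt; omega⟩ 1

/-- The linear form `f_{w,ξ} = ∑_{β ∈ Supp(w)} ξ(β) e_β*`. -/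
noncomputable def fwxi (n : ℕ) (w : Equiv.Perm ℤ) (xi : Fin n × Fin n × Bool → ℂˣ) : Mat n :=
  ∑ r ∈ suppFinset n w, ((xi r : ℂ) • eStar n r)

/-- The linear form `f_w = ∑_{β ∈ Supp(w)} e_β*`. -/
noncomputable def fw (n : ℕ) (w : Equiv.Perm ℤ) : Mat n := ∑ r ∈ suppFinset n w, eStar n r

/-- The coadjoint `B`-orbit `Ω_w` of `f_w`. -/
def OmegaSet (n : ℕ) (w : Equiv.Perm ℤ) : Set (Mat n) :=
  {m | ∃ b ∈ Bset n, m = coad n b (fw n w)}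

/-- The coadjoint `U`-orbit `Θ_{w,ξ}` of `f_{w,ξ}`. -/
def ThetaSet (n : ℕ) (w : Equiv.Perm ℤ) (xi : Fin n × Fin n × Bool → ℂˣ) : Set (Mat n) :=
  {m | ∃ u ∈ Uset n, m = coad n u (fwxi n w xi)}

/-! ### Auxiliary lemmas for Statement 8 -/

namespace Statement8Aux

open Matrix

variable {n : ℕ} {w : Equiv.Perm ℤ}

/-- Upper triangular (weakly). -/
abbrev UT (M : Mat n) : Prop := M.BlockTriangular (id : Fin (2*n) → Fin (2*n))

lemma ut_iff {M : Mat n} : UT M ↔ ∀ i j : Fin (2*n), (j : ℕ) < (i : ℕ) → M i j = 0 := by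
  constructor
  · intro h i j hij; exact h hij
  · intro h i j hij; exact h i j hij

lemma lowPart_apply (M : Mat n) (i j : Fin (2*n)) :
    lowPart n M i j = if (j:ℕ) < (i:ℕ) then M i j else 0 := rfl

lemma lowPart_add (M N : Mat n) : lowPart n (M + N) = lowPart n M + lowPart n N := by
  ext i j; simp only [lowPart_apply, Matrix.add_apply]; split <;> simp

lemma lowPart_of_ut {M : Mat n} (h : UT M) : lowPart n M = 0 := by
  ext i j; simp only [lowPart_apply, Matrix.zero_apply]
  split_ifs with hc
  · exact ut_iff.1 h i j hc
  · rfl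

lemma lowPart_of_low {M : Mat n} (h : ∀ i j : Fin (2*n), ¬ (j:ℕ) < (i:ℕ) → M i j = 0) :
    lowPart n M = M := by
  ext i j; simp only [lowPart_apply]
  split_ifs with hc
  · rfl
  · exact (h i j hc).symm

lemma ut_sub_lowPart (M : Mat n) : UT (M - lowPart n M) := by
  rw [ut_iff]; intro i j hij; simp [lowPart_apply, hij]

lemma ut_inv {M : Mat n} (h : UT M) (hd : IsUnit M.det) : UT M⁻¹ := by
  have : Invertible M := M.invertibleOfIsUnitDet hd
  exact Matrix.blockTriangular_inv_of_blockTriangular h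

lemma coad_mul {b₁ b₂ : Mat n} (h₁ : UT b₁) (d₁ : IsUnit b₁.det) (lam : Mat n) :
    coad n (b₁ * b₂) lam = coad n b₁ (coad n b₂ lam) := by
  have hrev : (b₁ * b₂)⁻¹ = b₂⁻¹ * b₁⁻¹ := Matrix.mul_inv_rev _ _
  set X := b₂ * lam * b₂⁻¹ with hX
  have key : b₁ * b₂ * lam * (b₁ * b₂)⁻¹
      = b₁ * lowPart n X * b₁⁻¹ + b₁ * (X - lowPart n X) * b₁⁻¹ := by
    rw [hrev]
    have h2 : b₁ * lowPart n X * b₁⁻¹ + b₁ * (X - lowPart n X) * b₁⁻¹ = b₁ * X * b₁⁻¹ := by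
      rw [← Matrix.add_mul, ← Matrix.mul_add, add_sub_cancel]
    rw [h2, hX]
    simp only [Matrix.mul_assoc]
  unfold coad
  rw [key, lowPart_add]
  have h2 : UT (b₁ * (X - lowPart n X) * b₁⁻¹) :=
    (h₁.mul (ut_sub_lowPart X)).mul (ut_inv h₁ d₁)
  rw [lowPart_of_ut h2, add_zero]

lemma eStar_cases {a b : Fin n} {β : Bool} {i j : Fin (2*n)}
    (h : eStar n (a, b, β) i j ≠ 0) :
    (β = false ∧ ((i:ℕ) = (b:ℕ) ∧ (j:ℕ) = (a:ℕ) ∨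
       (i:ℕ) = 2*n-1-(a:ℕ) ∧ (j:ℕ) = 2*n-1-(b:ℕ))) ∨
    (β = true ∧ ((i:ℕ) = 2*n-1-(b:ℕ) ∧ (j:ℕ) = (a:ℕ) ∨
       (i:ℕ) = 2*n-1-(a:ℕ) ∧ (j:ℕ) = (b:ℕ))) := by
  cases β
  · refine Or.inl ⟨rfl, ?_⟩
    simp only [eStar, Bool.false_eq_true, if_false, Matrix.sub_apply,
      Matrix.single, Matrix.of_apply, Fin.ext_iff] at h
    split_ifs at h <;> first
      | omega
      | simp at h
  · refine Or.inr ⟨rfl, ?_⟩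
    simp only [eStar, if_true, Matrix.sub_apply,
      Matrix.single, Matrix.of_apply, Fin.ext_iff] at h
    split_ifs at h <;> first
      | omega
      | simp at h

lemma wtrick (hsq : ∀ x : ℤ, w (w x) = x) (hneg : ∀ x : ℤ, w (-x) = -(w x))
    {x y : ℤ} (h : w x = -y) : w y = -x := by
  have h2 := hsq x
  rw [h, hneg] at h2
  omega

lemma supp_extract_false {a b : Fin n}
    (h : (a, b, (false : Bool)) ∈ suppFinset n w) :
    (a:ℕ) < (b:ℕ) ∧ w (((a:ℕ):ℤ) + 1) = ((b:ℕ):ℤ) + 1 := by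
  simp only [suppFinset, Finset.mem_filter] at h
  obtain ⟨-, h1, h2⟩ := h
  refine ⟨h1, ?_⟩
  rcases h2 with ⟨-, h3⟩ | ⟨e, -⟩
  · exact h3
  · exact absurd e (by simp)

lemma supp_extract_true {a b : Fin n}
    (h : (a, b, (true : Bool)) ∈ suppFinset n w) :
    (a:ℕ) < (b:ℕ) ∧ w (((a:ℕ):ℤ) + 1) = -(((b:ℕ):ℤ) + 1) := by
  simp only [suppFinset, Finset.mem_filter] at h
  obtain ⟨-, h1, h2⟩ := h
  refine ⟨h1, ?_⟩
  rcases h2 with ⟨e, -⟩ | ⟨-, h3⟩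
  · exact absurd e (by simp)
  · exact h3

lemma col_unique (hsq : ∀ x : ℤ, w (w x) = x) (hneg : ∀ x : ℤ, w (-x) = -(w x))
    {r r' : Fin n × Fin n × Bool} (hr : r ∈ suppFinset n w) (hr' : r' ∈ suppFinset n w)
    {i i' j : Fin (2*n)} (h : eStar n r i j ≠ 0) (h' : eStar n r' i' j ≠ 0) :
    i = i' := by
  obtain ⟨a, b, β⟩ := r
  obtain ⟨a', b', β'⟩ := r'
  have hbn := b.isLt; have han := a.isLt; have hbn' := b'.isLt; have han' := a'.isLt
  rcases eStar_cases h with ⟨hβ, hp⟩ | ⟨hβ, hp⟩ <;> subst hβ <;>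
    rcases eStar_cases h' with ⟨hβ', hp'⟩ | ⟨hβ', hp'⟩ <;> subst hβ'
  · obtain ⟨hab, hw1⟩ := supp_extract_false hr
    obtain ⟨hab', hw2⟩ := supp_extract_false hr'
    rcases hp with ⟨hi, hj⟩ | ⟨hi, hj⟩ <;> rcases hp' with ⟨hi', hj'⟩ | ⟨hi', hj'⟩
    · have e : ((a:ℕ):ℤ) = ((a':ℕ):ℤ) := by omega
      rw [e] at hw1
      have e2 := hw1.symm.trans hw2
      exact Fin.ext (by omega)
    · exfalso; omega
    · exfalso; omega
    · have e : ((b:ℕ):ℤ) = ((b':ℕ):ℤ) := by omega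
      rw [← e] at hw2
      have e3 := w.injective (hw1.trans hw2.symm)
      exact Fin.ext (by omega)
  · obtain ⟨hab, hw1⟩ := supp_extract_false hr
    obtain ⟨hab', hw2⟩ := supp_extract_true hr'
    exfalso
    rcases hp with ⟨hi, hj⟩ | ⟨hi, hj⟩ <;> rcases hp' with ⟨hi', hj'⟩ | ⟨hi', hj'⟩
    · have e : ((a:ℕ):ℤ) = ((a':ℕ):ℤ) := by omega
      rw [e, hw2] at hw1; omega
    · have e : ((b':ℕ):ℤ) = ((a:ℕ):ℤ) := by omega
      rw [e] at hw2
      have e2 := wtrick hsq hneg hw2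
      rw [hw1] at e2; omega
    · omega
    · omega
  · obtain ⟨hab, hw1⟩ := supp_extract_true hr
    obtain ⟨hab', hw2⟩ := supp_extract_false hr'
    exfalso
    rcases hp with ⟨hi, hj⟩ | ⟨hi, hj⟩ <;> rcases hp' with ⟨hi', hj'⟩ | ⟨hi', hj'⟩
    · have e : ((a:ℕ):ℤ) = ((a':ℕ):ℤ) := by omega
      rw [e, hw2] at hw1; omega
    · omega
    · have e : ((b:ℕ):ℤ) = ((a':ℕ):ℤ) := by omega
      rw [e] at hw1
      have e2 := wtrick hsq hneg hw1
      rw [hw2] at e2; omega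
    · omega
  · obtain ⟨hab, hw1⟩ := supp_extract_true hr
    obtain ⟨hab', hw2⟩ := supp_extract_true hr'
    rcases hp with ⟨hi, hj⟩ | ⟨hi, hj⟩ <;> rcases hp' with ⟨hi', hj'⟩ | ⟨hi', hj'⟩
    · have e : ((a:ℕ):ℤ) = ((a':ℕ):ℤ) := by omega
      rw [e, hw2] at hw1
      exact Fin.ext (by omega)
    · exfalso
      have e : ((b':ℕ):ℤ) = ((a:ℕ):ℤ) := by omega
      rw [e] at hw2
      have e2 := wtrick hsq hneg hw2
      rw [hw1] at e2; omega
    · exfalso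
      have e : ((b:ℕ):ℤ) = ((a':ℕ):ℤ) := by omega
      rw [e] at hw1
      have e2 := wtrick hsq hneg hw1
      rw [hw2] at e2; omega
    · have e : ((b:ℕ):ℤ) = ((b':ℕ):ℤ) := by omega
      rw [← e] at hw2
      have e3 := w.injective (hw1.trans hw2.symm)
      exact Fin.ext (by omega)

lemma row_unique (hsq : ∀ x : ℤ, w (w x) = x) (hneg : ∀ x : ℤ, w (-x) = -(w x))
    {r r' : Fin n × Fin n × Bool} (hr : r ∈ suppFinset n w) (hr' : r' ∈ suppFinset n w)
    {i j j' : Fin (2*n)} (h : eStar n r i j ≠ 0) (h' : eStar n r' i j' ≠ 0) :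
    j = j' := by
  obtain ⟨a, b, β⟩ := r
  obtain ⟨a', b', β'⟩ := r'
  have hbn := b.isLt; have han := a.isLt; have hbn' := b'.isLt; have han' := a'.isLt
  rcases eStar_cases h with ⟨hβ, hp⟩ | ⟨hβ, hp⟩ <;> subst hβ <;>
    rcases eStar_cases h' with ⟨hβ', hp'⟩ | ⟨hβ', hp'⟩ <;> subst hβ'
  · obtain ⟨hab, hw1⟩ := supp_extract_false hr
    obtain ⟨hab', hw2⟩ := supp_extract_false hr'
    rcases hp with ⟨hi, hj⟩ | ⟨hi, hj⟩ <;> rcases hp' with ⟨hi', hj'⟩ | ⟨hi', hj'⟩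
    · have e : ((b:ℕ):ℤ) = ((b':ℕ):ℤ) := by omega
      rw [← e] at hw2
      have e3 := w.injective (hw1.trans hw2.symm)
      exact Fin.ext (by omega)
    · exfalso; omega
    · exfalso; omega
    · have e : ((a:ℕ):ℤ) = ((a':ℕ):ℤ) := by omega
      rw [e] at hw1
      have e2 := hw1.symm.trans hw2
      exact Fin.ext (by omega)
  · obtain ⟨hab, hw1⟩ := supp_extract_false hr
    obtain ⟨hab', hw2⟩ := supp_extract_true hr'
    exfalso
    rcases hp with ⟨hi, hj⟩ | ⟨hi, hj⟩ <;> rcases hp' with ⟨hi', hj'⟩ | ⟨hi', hj'⟩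
    · omega
    · omega
    · have e : ((b':ℕ):ℤ) = ((a:ℕ):ℤ) := by omega
      rw [e] at hw2
      have e2 := wtrick hsq hneg hw2
      rw [hw1] at e2; omega
    · have e : ((a:ℕ):ℤ) = ((a':ℕ):ℤ) := by omega
      rw [e, hw2] at hw1; omega
  · obtain ⟨hab, hw1⟩ := supp_extract_true hr
    obtain ⟨hab', hw2⟩ := supp_extract_false hr'
    exfalso
    rcases hp with ⟨hi, hj⟩ | ⟨hi, hj⟩ <;> rcases hp' with ⟨hi', hj'⟩ | ⟨hi', hj'⟩
    · omega
    · have e : ((b:ℕ):ℤ) = ((a':ℕ):ℤ) := by omega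
      rw [e] at hw1
      have e2 := wtrick hsq hneg hw1
      rw [hw2] at e2; omega
    · omega
    · have e : ((a:ℕ):ℤ) = ((a':ℕ):ℤ) := by omega
      rw [e, hw2] at hw1; omega
  · obtain ⟨hab, hw1⟩ := supp_extract_true hr
    obtain ⟨hab', hw2⟩ := supp_extract_true hr'
    rcases hp with ⟨hi, hj⟩ | ⟨hi, hj⟩ <;> rcases hp' with ⟨hi', hj'⟩ | ⟨hi', hj'⟩
    · have e : ((b:ℕ):ℤ) = ((b':ℕ):ℤ) := by omega
      rw [← e] at hw2
      have e3 := w.injective (hw1.trans hw2.symm)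
      exact Fin.ext (by omega)
    · exfalso
      have e : ((b:ℕ):ℤ) = ((a':ℕ):ℤ) := by omega
      rw [e] at hw1
      have e2 := wtrick hsq hneg hw1
      rw [hw2] at e2; omega
    · exfalso
      have e : ((b':ℕ):ℤ) = ((a:ℕ):ℤ) := by omega
      rw [e] at hw2
      have e2 := wtrick hsq hneg hw2
      rw [hw1] at e2; omega
    · have e : ((a:ℕ):ℤ) = ((a':ℕ):ℤ) := by omega
      rw [e, hw2] at hw1
      exact Fin.ext (by omega)

lemma fw_apply (i j : Fin (2*n)) :
    fw n w i j = ∑ r ∈ suppFinset n w, eStar n r i j := by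
  unfold fw; rw [Matrix.sum_apply]

lemma fw_low (i j : Fin (2*n)) (h : ¬ (j:ℕ) < (i:ℕ)) : fw n w i j = 0 := by
  rw [fw_apply]
  apply Finset.sum_eq_zero
  intro r hr
  by_contra hne
  obtain ⟨a, b, β⟩ := r
  have hab : (a:ℕ) < (b:ℕ) := by
    simp only [suppFinset, Finset.mem_filter] at hr
    exact hr.2.1
  have hbn := b.isLt; have han := a.isLt
  rcases eStar_cases hne with ⟨-, hp⟩ | ⟨-, hp⟩ <;> rcases hp with ⟨hi, hj⟩ | ⟨hi, hj⟩ <;> omega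

lemma fw_col (hsq : ∀ x : ℤ, w (w x) = x) (hneg : ∀ x : ℤ, w (-x) = -(w x))
    {i j : Fin (2*n)} (h : fw n w i j ≠ 0) {k : Fin (2*n)} (hk : k ≠ i) :
    fw n w k j = 0 := by
  rw [fw_apply] at h
  obtain ⟨r, hr, hrne⟩ := Finset.exists_ne_zero_of_sum_ne_zero h
  rw [fw_apply]
  apply Finset.sum_eq_zero
  intro r' hr'
  by_contra hne
  exact hk (col_unique hsq hneg hr' hr hne hrne)

lemma fw_row (hsq : ∀ x : ℤ, w (w x) = x) (hneg : ∀ x : ℤ, w (-x) = -(w x))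
    {i j : Fin (2*n)} (h : fw n w i j ≠ 0) {l : Fin (2*n)} (hl : l ≠ j) :
    fw n w i l = 0 := by
  rw [fw_apply] at h
  obtain ⟨r, hr, hrne⟩ := Finset.exists_ne_zero_of_sum_ne_zero h
  rw [fw_apply]
  apply Finset.sum_eq_zero
  intro r' hr'
  by_contra hne
  exact hl (row_unique hsq hneg hr' hr hne hrne)

lemma bset_ut {g : Mat n} (hg : g ∈ Bset n) : UT g := ut_iff.2 hg.2

lemma bset_det_unit {g : Mat n} (hg : g ∈ Bset n) : IsUnit g.det := by
  rw [hg.1.1]; exact isUnit_one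

/-- The key lemma: if `b ∈ B` stabilizes `f_w`, the diagonal entries of `b` agree
at every support position of `f_w`. -/
lemma diag_eq {b : Mat n} (hb : b ∈ Bset n) (hc : coad n b (fw n w) = fw n w)
    (hsq : ∀ x : ℤ, w (w x) = x) (hneg : ∀ x : ℤ, w (-x) = -(w x))
    {i j : Fin (2*n)} (hfij : fw n w i j ≠ 0) : b i i = b j j := by
  have hbut : UT b := bset_ut hb
  have hunit : IsUnit b.det := bset_det_unit hb
  have hji : (j:ℕ) < (i:ℕ) := by
    by_contra hcon; exact hfij (fw_low i j hcon)
  have hY : UT (b * fw n w * b⁻¹ - fw n w) := by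
    rw [ut_iff]; intro p q hpq
    have h1 : coad n b (fw n w) p q = fw n w p q := by rw [hc]
    unfold coad at h1
    rw [lowPart_apply, if_pos hpq] at h1
    simp [Matrix.sub_apply, h1]
  have hmul : b * fw n w = fw n w * b + (b * fw n w * b⁻¹ - fw n w) * b := by
    rw [Matrix.sub_mul, Matrix.nonsing_inv_mul_cancel_right _ _ hunit]
    rw [add_sub_cancel]
  have key : (b * fw n w) i j = (fw n w * b) i j := by
    rw [hmul, Matrix.add_apply, ut_iff.1 (hY.mul hbut) i j hji, add_zero]
  have hl : (b * fw n w) i j = b i i * fw n w i j := by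
    rw [Matrix.mul_apply]
    apply Finset.sum_eq_single_of_mem i (Finset.mem_univ i)
    intro k _ hk
    rw [fw_col hsq hneg hfij hk, mul_zero]
  have hr : (fw n w * b) i j = fw n w i j * b j j := by
    rw [Matrix.mul_apply]
    apply Finset.sum_eq_single_of_mem j (Finset.mem_univ j)
    intro k _ hk
    rw [fw_row hsq hneg hfij hk, zero_mul]
  rw [hl, hr] at key
  have : b i i * fw n w i j = b j j * fw n w i j := by rw [key, mul_comm]
  exact mul_right_cancel₀ hfij this

lemma antidiag_mul {b : Mat n} (hb : b ∈ Bset n) {i j : Fin (2*n)}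
    (hij : (i:ℕ) + (j:ℕ) = 2*n-1) : b i i * b j j = 1 := by
  have hso := hb.1.2
  have h := congrArg (fun M : Mat n => M i j) hso
  replace h : (b.transpose * antidiagJ n * b) i j = antidiagJ n i j := h
  have hJ : antidiagJ n i j = 1 := by
    unfold antidiagJ; rw [Matrix.of_apply, if_pos hij]
  rw [hJ] at h
  -- compute (bᵀ * J) i k = b (τ k) i
  have step1 : ∀ k : Fin (2*n), (b.transpose * antidiagJ n) i k
      = b ⟨2*n-1-(k:ℕ), by have := k.isLt; omega⟩ i := by
    intro k
    rw [Matrix.mul_apply]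
    refine (Finset.sum_eq_single_of_mem
      (⟨2*n-1-(k:ℕ), by have := k.isLt; omega⟩ : Fin (2*n)) (Finset.mem_univ _) ?_).trans ?_
    · intro l _ hl
      have hlk : ¬ ((l:ℕ) + (k:ℕ) = 2*n-1) := by
        intro hcon
        exact hl (Fin.ext (show (l:ℕ) = 2*n-1-(k:ℕ) by omega))
      unfold antidiagJ
      rw [Matrix.of_apply, if_neg hlk, mul_zero]
    · unfold antidiagJ
      rw [Matrix.of_apply, if_pos (show 2*n-1-(k:ℕ) + (k:ℕ) = 2*n-1 by have := k.isLt; omega),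
        mul_one, Matrix.transpose_apply]
  have expand : (b.transpose * antidiagJ n * b) i j
      = ∑ k : Fin (2*n), b ⟨2*n-1-(k:ℕ), by have := k.isLt; omega⟩ i * b k j := by
    rw [Matrix.mul_apply]
    apply Finset.sum_congr rfl
    intro k _
    rw [step1]
  rw [expand] at h
  have final : (∑ k : Fin (2*n), b ⟨2*n-1-(k:ℕ), by have := k.isLt; omega⟩ i * b k j)
      = b i i * b j j := by
    refine (Finset.sum_eq_single_of_mem j (Finset.mem_univ j) ?_).trans ?_
    · intro k _ hk
      rcases lt_or_gt_of_ne (fun hcon : (k:ℕ) = (j:ℕ) => hk (Fin.ext hcon)) with hlt | hgt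
      · have : b (⟨2*n-1-(k:ℕ), by have := k.isLt; omega⟩ : Fin (2*n)) i = 0 := by
          apply hb.2
          simp only []
          have := j.isLt; omega
        rw [this, zero_mul]
      · rw [hb.2 k j hgt, mul_zero]
    · have e : (⟨2*n-1-(j:ℕ), by have := j.isLt; omega⟩ : Fin (2*n)) = i :=
        Fin.ext (show 2*n-1-(j:ℕ) = (i:ℕ) by have := j.isLt; omega)
      rw [e]
  rw [final] at h
  exact h

end Statement8Aux

namespace Statement8Aux

variable {n : ℕ} {w : Equiv.Perm ℤ}

lemma coad_diagonal (d : Fin (2*n) → ℂ) (hd : ∀ i j : Fin (2*n), fw n w i j ≠ 0 → d i = d j)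
    (hdn : ∀ i, d i ≠ 0) :
    coad n (Matrix.diagonal d) (fw n w) = fw n w := by
  have hinv : (Matrix.diagonal d)⁻¹ = Matrix.diagonal (fun i => (d i)⁻¹) := by
    apply Matrix.inv_eq_right_inv
    rw [Matrix.diagonal_mul_diagonal]
    have he : (fun i => d i * (d i)⁻¹) = fun _ => (1 : ℂ) := by
      funext i; exact mul_inv_cancel₀ (hdn i)
    rw [he, Matrix.diagonal_one]
  unfold coad
  rw [hinv]
  have hmm : Matrix.diagonal d * fw n w * Matrix.diagonal (fun i => (d i)⁻¹) = fw n w := by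
    ext i j
    rw [Matrix.mul_diagonal, Matrix.diagonal_mul]
    by_cases hf : fw n w i j = 0
    · rw [hf]; ring
    · rw [hd i j hf]
      exact mul_div_cancel_left₀ _ (hdn j)
  rw [hmm]
  exact lowPart_of_low (fun i j h => fw_low i j h)

end Statement8Aux

/-- Let `w` be a basic involution in the Weyl group of type `Dₙ`,
`n ≥ 4`, and let `Z_B`, `Z_U`, `Z_T` be the stabilizers of `f_w` under the coadjoint
action in `B`, `U`, `T` respectively. Then the multiplication map
`Z_U × Z_T → Z_B`, `(u, h) ↦ u h`, is well defined and bijective. -/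
theorem statement8 (n : ℕ) (hn : 4 ≤ n) (w : Equiv.Perm ℤ)
    (hw : IsBasicInvolution n w) :
    Set.BijOn (fun p : Mat n × Mat n => p.1 * p.2)
      ({u ∈ Uset n | coad n u (fw n w) = fw n w} ×ˢ
        {t ∈ Tset n | coad n t (fw n w) = fw n w})
      {b ∈ Bset n | coad n b (fw n w) = fw n w} := by
  classical
  obtain ⟨⟨hneg, hfix, -⟩, hsq2, -⟩ := hw
  have hsq : ∀ x : ℤ, w (w x) = x := by
    intro x
    have h := Equiv.ext_iff.1 hsq2 x
    simpa using h
  set f := fw n w with hf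
  -- basic facts
  have tset_ut : ∀ {t : Mat n}, t ∈ Tset n → Statement8Aux.UT t := by
    intro t ht
    rw [Statement8Aux.ut_iff]
    intro i j hij
    exact ht.2 i j (fun e => by rw [e] at hij; omega)
  have tset_det : ∀ {t : Mat n}, t ∈ Tset n → IsUnit t.det := by
    intro t ht; rw [ht.1.1]; exact isUnit_one
  constructor
  · -- MapsTo
    rintro ⟨u, t⟩ hp
    simp only [Set.mem_prod, Set.mem_setOf_eq] at hp
    obtain ⟨⟨hu, hcu⟩, ht, hct⟩ := hp
    obtain ⟨⟨⟨hudet, huso⟩, hutri⟩, hudiag⟩ := hu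
    obtain ⟨⟨htdet, htso⟩, htdiag⟩ := ht
    simp only [Set.mem_setOf_eq]
    constructor
    · refine ⟨⟨?_, ?_⟩, ?_⟩
      · rw [Matrix.det_mul, hudet, htdet, one_mul]
      · rw [Matrix.transpose_mul]
        calc t.transpose * u.transpose * antidiagJ n * (u * t)
              = t.transpose * (u.transpose * antidiagJ n * u) * t := by
              simp only [Matrix.mul_assoc]
          _ = t.transpose * antidiagJ n * t := by rw [huso]
          _ = antidiagJ n := htso
      · intro i j hij
        rw [Matrix.mul_apply]
        apply Finset.sum_eq_zero
        intro k _
        rcases le_or_gt (k : ℕ) (j : ℕ) with hkj | hkj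
        · rw [hutri i k (by omega), zero_mul]
        · rw [htdiag k j (fun e => by rw [e] at hkj; omega), mul_zero]
    · rw [Statement8Aux.coad_mul (Statement8Aux.ut_iff.2 hutri) (by rw [hudet]; exact isUnit_one) f,
        hct, hcu]
  constructor
  · -- InjOn
    rintro ⟨u₁, t₁⟩ hp ⟨u₂, t₂⟩ hq heq
    simp only [Set.mem_prod, Set.mem_setOf_eq] at hp hq
    obtain ⟨⟨hu₁, -⟩, ht₁, -⟩ := hp
    obtain ⟨⟨hu₂, -⟩, ht₂, -⟩ := hq
    simp only at heq
    have hdiag : ∀ i : Fin (2*n), t₁ i i = t₂ i i := by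
      intro i
      have h1 : (u₁ * t₁) i i = t₁ i i := by
        rw [Matrix.mul_apply]
        rw [Finset.sum_eq_single_of_mem i (Finset.mem_univ i)
          (fun k _ hk => by rw [ht₁.2 k i hk, mul_zero])]
        rw [hu₁.2 i, one_mul]
      have h2 : (u₂ * t₂) i i = t₂ i i := by
        rw [Matrix.mul_apply]
        rw [Finset.sum_eq_single_of_mem i (Finset.mem_univ i)
          (fun k _ hk => by rw [ht₂.2 k i hk, mul_zero])]
        rw [hu₂.2 i, one_mul]
      rw [← h1, ← h2, heq]
    have ht12 : t₁ = t₂ := by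
      ext i j
      by_cases hij : i = j
      · subst hij; exact hdiag i
      · rw [ht₁.2 i j (fun e => hij e), ht₂.2 i j (fun e => hij e)]
    have hu12 : u₁ = u₂ := by
      have hdet : IsUnit t₁.det := tset_det ht₁
      calc u₁ = u₁ * t₁ * t₁⁻¹ := by rw [Matrix.mul_nonsing_inv_cancel_right _ _ hdet]
        _ = u₂ * t₂ * t₁⁻¹ := by rw [heq]
        _ = u₂ * t₁ * t₁⁻¹ := by rw [ht12]
        _ = u₂ := by rw [Matrix.mul_nonsing_inv_cancel_right _ _ hdet]
    rw [Prod.ext_iff]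
    exact ⟨hu12, ht12⟩
  · -- SurjOn
    rintro bb hbb
    simp only [Set.mem_setOf_eq] at hbb
    obtain ⟨hbB, hbc⟩ := hbb
    set d : Fin (2*n) → ℂ := fun i => bb i i with hdw
    have hbut : Statement8Aux.UT bb := Statement8Aux.bset_ut hbB
    have hdet1 : bb.det = 1 := hbB.1.1
    have hprod : (∏ i, d i) = 1 := by
      rw [← Matrix.det_of_upperTriangular hbut, hdet1]
    have hdnz : ∀ i, d i ≠ 0 := by
      intro i hzero
      have : (∏ i, d i) = 0 := Finset.prod_eq_zero (Finset.mem_univ i) hzero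
      rw [hprod] at this
      exact one_ne_zero this
    have hanti : ∀ i j : Fin (2*n), (i:ℕ) + (j:ℕ) = 2*n-1 → d i * d j = 1 := by
      intro i j hij
      exact Statement8Aux.antidiag_mul hbB hij
    have hdd : ∀ i j : Fin (2*n), f i j ≠ 0 → d i = d j := by
      intro i j hij
      exact Statement8Aux.diag_eq hbB hbc hsq hneg hij
    set t : Mat n := Matrix.diagonal d with htw
    have htTset : t ∈ Tset n := by
      refine ⟨⟨?_, ?_⟩, ?_⟩
      · rw [htw, Matrix.det_diagonal, hprod]
      · rw [htw, Matrix.diagonal_transpose]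
        ext i j
        rw [Matrix.mul_diagonal, Matrix.diagonal_mul]
        unfold antidiagJ
        simp only [Matrix.of_apply]
        split_ifs with hij
        · rw [mul_one]; exact hanti i j hij
        · rw [mul_zero, zero_mul]
      · intro i j hij
        exact Matrix.diagonal_apply_ne d hij
    have htdetu : IsUnit t.det := tset_det htTset
    have htinv : t⁻¹ = Matrix.diagonal (fun i => (d i)⁻¹) := by
      apply Matrix.inv_eq_right_inv
      rw [htw, Matrix.diagonal_mul_diagonal]
      have he : (fun i => d i * (d i)⁻¹) = fun _ => (1 : ℂ) := by
        funext i; exact mul_inv_cancel₀ (hdnz i)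
      rw [he, Matrix.diagonal_one]
    have hct : coad n t f = f := Statement8Aux.coad_diagonal d hdd hdnz
    have hctinv : coad n t⁻¹ f = f := by
      rw [htinv]
      refine Statement8Aux.coad_diagonal _ (fun i j hij => by rw [hdd i j hij]) ?_
      intro i
      exact inv_ne_zero (hdnz i)
    set u : Mat n := bb * t⁻¹ with huw
    have hut : u * t = bb := by
      rw [huw, Matrix.nonsing_inv_mul_cancel_right _ _ htdetu]
    have huut : Statement8Aux.UT u := by
      rw [huw, htinv]
      exact hbut.mul (Matrix.blockTriangular_diagonal _)
    have huUset : u ∈ Uset n := by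
      refine ⟨⟨⟨?_, ?_⟩, ?_⟩, ?_⟩
      · rw [huw, Matrix.det_mul, hdet1, one_mul, Matrix.det_nonsing_inv, htw,
          Matrix.det_diagonal, hprod]
        simp [Ring.inverse_one]
      · rw [huw, htinv, Matrix.transpose_mul, Matrix.diagonal_transpose]
        calc (Matrix.diagonal fun i => (d i)⁻¹) * bb.transpose * antidiagJ n
              * (bb * Matrix.diagonal fun i => (d i)⁻¹)
            = (Matrix.diagonal fun i => (d i)⁻¹) * (bb.transpose * antidiagJ n * bb)
              * Matrix.diagonal fun i => (d i)⁻¹ := by simp only [Matrix.mul_assoc]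
          _ = (Matrix.diagonal fun i => (d i)⁻¹) * antidiagJ n
              * Matrix.diagonal fun i => (d i)⁻¹ := by rw [hbB.1.2]
          _ = antidiagJ n := by
              ext i j
              rw [Matrix.mul_diagonal, Matrix.diagonal_mul]
              unfold antidiagJ
              simp only [Matrix.of_apply]
              split_ifs with hij
              · rw [mul_one, ← mul_inv, hanti i j hij, inv_one]
              · rw [mul_zero, zero_mul]
      · exact Statement8Aux.ut_iff.1 huut
      · intro i
        rw [huw, htinv, Matrix.mul_diagonal]
        exact mul_inv_cancel₀ (hdnz i)
    have hcu : coad n u f = f := by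
      have h1 : coad n (u * t) f = coad n u (coad n t f) :=
        Statement8Aux.coad_mul huut (by rw [huUset.1.1.1]; exact isUnit_one) f
      rw [hut, hbc, hct] at h1
      exact h1.symm
    refine ⟨(u, t), ?_, ?_⟩
    · simp only [Set.mem_prod, Set.mem_setOf_eq]
      exact ⟨⟨huUset, hcu⟩, htTset, hct⟩
    · simp only
      exact hut
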